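/- The generated tree depth of a pointed structure (A,a) (the minimum height of a generated tree cover) equals its hybrid coalgebra number (the least k such that an Hk-coalgebra (A,a) → Hk(A,a) exists, or ω if none exists), up to the offset: the coalgebra number is k iff the generated tree depth is k+1 (minimal such k). -/

import Mathlib

/-- A pointed structure over a unimodal vocabulary: unary predicates indexed by `ι`,
one transition relation `E`, and a distinguished point. -/
structure PStr (ι : Type) where
  W : Type
  p : ι → W → Prop
  E : W → W → Prop
  pt : W

namespace PStr

variable {ι : Type}

/-- The universe of the hybrid comonad `Hk(A,a)`: nonempty plays of length ≤ k+1
starting at the distinguished point, in which every later element is seen (via `E`)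
from some earlier element. -/
def Valid (A : PStr ι) (k : ℕ) (s : List A.W) : Prop :=
  s ≠ [] ∧ s.head? = some A.pt ∧ s.length ≤ k + 1 ∧
    ∀ j : Fin s.length, 0 < (j : ℕ) →
      ∃ i : Fin s.length, (i : ℕ) < (j : ℕ) ∧ A.E (s.get i) (s.get j)

/-- The last element of a play (the counit ε). -/
def lastW (A : PStr ι) (s : List A.W) : A.W := s.getLast?.getD A.pt

/-- Lifting of a unary predicate to plays: it holds of the last element. -/
def liftP (A : PStr ι) (i : ι) (s : List A.W) : Prop := s ≠ [] ∧ A.p i (lastW A s)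

/-- Lifting of the transition relation to plays: the plays are comparable in the
prefix order and `E` holds of their last elements. -/
def liftE (A : PStr ι) (s t : List A.W) : Prop :=
  (s <+: t ∨ t <+: s) ∧ s ≠ [] ∧ t ≠ [] ∧ A.E (lastW A s) (lastW A t)

end PStr


namespace PStr

variable {ι : Type}

/-- A coalgebra `α : (A,a) → Hk(A,a)` for the hybrid comonad: a homomorphism of
pointed structures landing in valid plays, satisfying the counit and
comultiplication laws.  (Here `δ` sends a play to its list of nonempty prefixes and
`Hk α` acts by mapping `α` over a play, so the comultiplication law reads:
the `(j+1)`-st prefix of `α w` equals `α` of the `j`-th entry of `α w`.) -/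
def IsCoalg (A : PStr ι) (k : ℕ) (α : A.W → List A.W) : Prop :=
  (∀ w, Valid A k (α w)) ∧
  α A.pt = [A.pt] ∧
  (∀ i w, A.p i w → liftP A i (α w)) ∧
  (∀ w w', A.E w w' → liftE A (α w) (α w')) ∧
  (∀ w, lastW A (α w) = w) ∧
  (∀ w, ∀ j : Fin (α w).length, (α w).take ((j : ℕ) + 1) = α ((α w).get j))

/-- A generated tree cover of `(A,a)` of height ≤ n: a tree partial order on the
universe with least element the distinguished point, in which Gaifman-adjacent
elements are comparable, every non-root element is seen via `E` from a strictly
smaller element, and every chain has at most `n` elements. -/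
def GenTreeCover (A : PStr ι) (r : A.W → A.W → Prop) (n : ℕ) : Prop :=
  IsPartialOrder A.W r ∧
  (∀ x, r A.pt x) ∧
  (∀ x y z, r y x → r z x → (r y z ∨ r z y)) ∧
  (∀ x y, x ≠ y → (A.E x y ∨ A.E y x) → (r x y ∨ r y x)) ∧
  (∀ x, x ≠ A.pt → ∃ y, r y x ∧ y ≠ x ∧ A.E y x) ∧
  (∀ C : Set A.W, IsChain r C → C.encard ≤ (n : ℕ∞))


/-- The generated tree depth of `(A,a)` (the minimum height of a generated tree
cover) coincides with its hybrid coalgebra number (the least `k` admitting an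
`Hk`-coalgebra, ω if none exists), up to the offset: for every `k > 0`, an
`Hk`-coalgebra on `(A,a)` exists iff `(A,a)` has a generated tree cover of height
at most `k+1`.  Hence the least such `k` (the hybrid coalgebra number) is `k` iff
the generated tree depth is `k+1`, and one is ω iff the other is. -/
private lemma head?_eq_get' {β : Type*} (s : List β) (h : 0 < s.length) :
    s.head? = some (s.get ⟨0, h⟩) := by
  cases s with
  | nil => simp at h
  | cons a t => rfl

private lemma lastW_get (A : PStr ι) (s : List A.W) (h : s ≠ [])
    (hl : s.length - 1 < s.length) :
    lastW A s = s.get ⟨s.length - 1, hl⟩ := by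
  rw [lastW, List.getLast?_eq_getLast h, Option.getD_some, List.getLast_eq_getElem, List.get_eq_getElem]

theorem generated_tree_depth_eq_hybrid_coalgebra_number (A : PStr ι) (k : ℕ) (hk : 0 < k) :
    (∃ α : A.W → List A.W, IsCoalg A k α) ↔
      (∃ r : A.W → A.W → Prop, GenTreeCover A r (k + 1)) := by
  constructor
  · rintro ⟨α, hval, hpt, _hP, hE, hlast, hcomul⟩
    have hinj : Function.Injective α := fun x y h => by rw [← hlast x, ← hlast y, h]
    refine ⟨fun x y => α x <+: α y, ?_, ?_, ?_, ?_, ?_, ?_⟩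
    · exact { refl := fun x => List.prefix_refl _,
              trans := fun a b c h1 h2 => h1.trans h2,
              antisymm := fun a b h1 h2 =>
                hinj (h1.eq_of_length (le_antisymm h1.length_le h2.length_le)) }
    · intro x
      obtain ⟨hne, hhead, -, -⟩ := hval x
      have h0 : 0 < (α x).length := List.length_pos_iff.2 hne
      have hx0 : (α x).get ⟨0, h0⟩ = A.pt := by
        have := head?_eq_get' (α x) h0
        rw [hhead] at this; exact (Option.some_injective _ this).symm
      obtain ⟨a, t, hαx⟩ := List.exists_cons_of_ne_nil hne
      have ha : a = A.pt := by rw [hαx] at hhead; simpa using hhead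
      refine ⟨(α x).tail, ?_⟩
      rw [hpt, hαx, ha]
      simp
    · exact fun x y z h1 h2 => List.prefix_or_prefix_of_prefix h1 h2
    · intro x y hne hor
      rcases hor with h | h
      · exact (hE x y h).1
      · exact ((hE y x h).1).symm
    · intro x hx
      obtain ⟨hne, hhead, hlen, hsee⟩ := hval x
      have h0 : 0 < (α x).length := List.length_pos_iff.2 hne
      have h2 : 2 ≤ (α x).length := by
        rcases Nat.lt_or_ge (α x).length 2 with h | h
        · exfalso
          have h1 : (α x).length = 1 := by omega
          obtain ⟨a, ha⟩ := List.length_eq_one_iff.1 h1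
          have : a = A.pt := by
            rw [ha] at hhead; simpa using hhead
          apply hx
          rw [← hlast x, ha, this]
          simp [lastW]
        · exact h
      have hjlt : (α x).length - 1 < (α x).length := by omega
      obtain ⟨i, hij, hEij⟩ := hsee ⟨(α x).length - 1, hjlt⟩ (by simp; omega)
      have hgetj : (α x).get ⟨(α x).length - 1, hjlt⟩ = x := by
        rw [← lastW_get A (α x) hne hjlt, hlast]
      refine ⟨(α x).get i, ?_, ?_, ?_⟩
      · show α ((α x).get i) <+: α x
        rw [← hcomul x i]; exact List.take_prefix _ _
      · intro hcontra
        have hl1 := congrArg List.length (hcomul x i)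
        rw [List.length_take] at hl1
        have hl2 := congrArg (fun z => (α z).length) hcontra
        simp only at hij
        omega
      · rw [hgetj] at hEij; exact hEij
    · intro C hC
      have hinjOn : Set.InjOn (fun x => (α x).length) C := by
        intro x hx y hy hxy
        by_contra hne
        rcases hC hx hy hne with h | h
        · exact hne (hinj (h.eq_of_length hxy))
        · exact hne (hinj (h.eq_of_length hxy.symm)).symm
      calc C.encard = ((fun x => (α x).length) '' C).encard := (hinjOn.encard_image).symm
        _ ≤ ((Finset.Icc 1 (k+1) : Finset ℕ) : Set ℕ).encard := by
            apply Set.encard_mono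
            rintro _ ⟨x, hx, rfl⟩
            obtain ⟨hne, -, hlen, -⟩ := hval x
            simp only [Finset.coe_Icc, Set.mem_Icc]
            exact ⟨List.length_pos_iff.2 hne, hlen⟩
        _ ≤ (((k:ℕ) + 1 : ℕ) : ℕ∞) := by
            rw [Set.encard_coe_eq_coe_finsetCard, Nat.card_Icc]
            norm_num
  · rintro ⟨r, hpo, hroot, htree, hcomp, hpred, hchain⟩
    classical
    haveI := hpo
    have hrefl : ∀ x, r x x := fun x => refl_of r x
    have htrans : ∀ {x y z}, r x y → r y z → r x z := fun h1 h2 => trans_of r h1 h2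
    have hanti : ∀ {x y}, r x y → r y x → x = y := fun h1 h2 => antisymm_of r h1 h2
    set S : A.W → Set A.W := fun w => {y | r y w} with hS
    have hmemS : ∀ w, w ∈ S w := fun w => hrefl w
    have hptS : ∀ w, A.pt ∈ S w := fun w => hroot w
    have hchainS : ∀ w, IsChain r (S w) := fun w x hx y hy _ => htree w x y hx hy
    have hfin : ∀ w, (S w).Finite := by
      intro w
      have h := hchain (S w) (hchainS w)
      exact (Set.encard_le_coe_iff.1 h).1
    set n : A.W → ℕ := fun w => (S w).ncard with hn
    have hnbound : ∀ w, n w ≤ k + 1 := by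
      intro w
      have h := hchain (S w) (hchainS w)
      obtain ⟨-, n₀, hn₀, hle⟩ := Set.encard_le_coe_iff.1 h
      have : n w = n₀ := by rw [hn]; simp [Set.ncard_def, hn₀]
      omega
    have hsub : ∀ {y z}, r y z → S y ⊆ S z := fun h x hx => htrans hx h
    have hnmono : ∀ {y z}, r y z → n y ≤ n z := fun h => Set.ncard_le_ncard (hsub h) (hfin _)
    have hnpos : ∀ w, 1 ≤ n w := fun w => (Set.ncard_pos (hfin w)).2 ⟨w, hmemS w⟩
    have hnstrict : ∀ {y z}, r y z → y ≠ z → n y < n z := by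
      intro y z h hne
      refine Set.ncard_lt_ncard ?_ (hfin z)
      refine (hsub h).ssubset_of_ne (fun heq => hne ?_)
      have : z ∈ S y := heq ▸ hmemS z
      exact hanti h this
    have hranku : ∀ {w y z}, y ∈ S w → z ∈ S w → n y = n z → y = z := by
      intro w y z hy hz hnyz
      by_contra hne
      rcases htree w y z hy hz with h | h
      · exact absurd hnyz (Nat.ne_of_lt (hnstrict h hne))
      · exact absurd hnyz.symm (Nat.ne_of_lt (hnstrict h (Ne.symm hne)))
    have hSpt : S A.pt = {A.pt} := by
      ext y
      simp only [Set.mem_singleton_iff]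
      constructor
      · intro hy; exact hanti hy (hroot y)
      · rintro rfl; exact hrefl _
    have hnpt : n A.pt = 1 := by rw [hn]; simp [hSpt]
    have hsurj : ∀ w m, 1 ≤ m → m ≤ n w → ∃ y, y ∈ S w ∧ n y = m := by
      intro w m h1 h2
      have hinjOn : Set.InjOn n (S w) := fun y hy z hz h => hranku hy hz h
      have himg : n '' S w ⊆ Set.Icc 1 (n w) := by
        rintro _ ⟨y, hy, rfl⟩
        exact ⟨hnpos y, hnmono hy⟩
      have hicc : (Set.Icc 1 (n w)).ncard = n w := by
        rw [← Finset.coe_Icc, Set.ncard_coe_finset, Nat.card_Icc]; omega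
      have heq : n '' S w = Set.Icc 1 (n w) := by
        refine Set.eq_of_subset_of_ncard_le himg ?_ ((Set.finite_Icc _ _))
        rw [hicc, Set.ncard_image_of_injOn hinjOn]
      have : m ∈ n '' S w := heq ▸ (Set.mem_Icc.2 ⟨h1, h2⟩)
      obtain ⟨y, hy, hny⟩ := this
      exact ⟨y, hy, hny⟩
    have hgex : ∀ w (j : ℕ), ∃ y, j + 1 ≤ n w → (y ∈ S w ∧ n y = j + 1) := by
      intro w j
      by_cases h : j + 1 ≤ n w
      · obtain ⟨y, hy⟩ := hsurj w (j + 1) (by omega) h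
        exact ⟨y, fun _ => hy⟩
      · exact ⟨A.pt, fun h' => absurd h' h⟩
    choose g hg using hgex
    set α : A.W → List A.W := fun w => (List.range (n w)).map (g w) with hα
    have hlen : ∀ w, (α w).length = n w := by intro w; simp [hα]
    have hne : ∀ w, α w ≠ [] := by
      intro w h
      have h2 := hlen w
      rw [h] at h2
      simp at h2
      have := hnpos w
      omega
    have hget : ∀ w (j : ℕ) (hj : j < (α w).length), (α w).get ⟨j, hj⟩ = g w j := by
      intro w j hj
      simp [hα]
    have hgmem : ∀ w (j : ℕ), j < n w → g w j ∈ S w ∧ n (g w j) = j + 1 := by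
      intro w j hj
      exact hg w j (by omega)
    -- α y = (α w).take (n y) whenever r y w
    have hpref : ∀ y w, r y w → α y = (α w).take (n y) := by
      intro y w hyw
      have hny : n y ≤ n w := hnmono hyw
      show (List.range (n y)).map (g y) = ((List.range (n w)).map (g w)).take (n y)
      rw [← List.map_take, List.take_range, min_eq_left hny]
      apply List.map_congr_left
      intro j hj
      rw [List.mem_range] at hj
      obtain ⟨hy1, hy2⟩ := hgmem y j hj
      obtain ⟨hw1, hw2⟩ := hgmem w j (by omega)
      exact hranku (hsub hyw hy1) hw1 (by rw [hy2, hw2])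
    have hg0 : ∀ w, g w 0 = A.pt := by
      intro w
      obtain ⟨h1, h2⟩ := hgmem w 0 (hnpos w)
      exact hranku h1 (hptS w) (by rw [h2, hnpt])
    have hglast : ∀ w, g w (n w - 1) = w := by
      intro w
      obtain ⟨h1, h2⟩ := hgmem w (n w - 1) (by have := hnpos w; omega)
      refine hranku h1 (hmemS w) ?_
      rw [h2]; have := hnpos w; omega
    have hlastα : ∀ w, lastW A (α w) = w := by
      intro w
      have hl : (α w).length - 1 < (α w).length := by
        rw [hlen]; have := hnpos w; omega
      rw [lastW_get A (α w) (hne w) hl, hget w _ hl]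
      rw [hlen]
      exact hglast w
    refine ⟨α, ?_, ?_, ?_, ?_, hlastα, ?_⟩
    · -- Valid
      intro w
      refine ⟨hne w, ?_, ?_, ?_⟩
      · have h0 : 0 < (α w).length := List.length_pos_iff.2 (hne w)
        rw [head?_eq_get' (α w) h0, hget w 0 h0, hg0 w]
      · rw [hlen]; exact hnbound w
      · intro j hj
        have hjn : (j : ℕ) < n w := by rw [← hlen w]; exact j.isLt
        obtain ⟨hjS, hjrank⟩ := hgmem w j hjn
        have hynept : g w (j : ℕ) ≠ A.pt := by
          intro h
          rw [h, hnpt] at hjrank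
          omega
        obtain ⟨y', hy'1, hy'2, hy'3⟩ := hpred _ hynept
        have hy'S : y' ∈ S w := hsub hjS hy'1
        have hy'lt : n y' < (j : ℕ) + 1 := hjrank ▸ hnstrict hy'1 hy'2
        have hy'pos := hnpos y'
        have hilt : n y' - 1 < (α w).length := by rw [hlen]; omega
        refine ⟨⟨n y' - 1, hilt⟩, by simp; omega, ?_⟩
        have : g w (n y' - 1) = y' := by
          obtain ⟨h1, h2⟩ := hgmem w (n y' - 1) (by omega)
          refine hranku h1 hy'S ?_
          rw [h2]; omega
        rw [hget w _ hilt, hget w _ j.isLt, this]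
        exact hy'3
    · -- α pt = [pt]
      show (List.range (n A.pt)).map (g A.pt) = [A.pt]
      rw [hnpt, show List.range 1 = [0] from rfl, List.map_cons, List.map_nil, hg0]
    · -- liftP
      intro i w hp
      exact ⟨hne w, by rw [hlastα w]; exact hp⟩
    · -- liftE
      intro w w' hEww'
      refine ⟨?_, hne w, hne w', by rw [hlastα w, hlastα w']; exact hEww'⟩
      by_cases hww' : w = w'
      · subst hww'; left; exact List.prefix_refl _
      · rcases hcomp w w' hww' (Or.inl hEww') with h | h
        · left; rw [hpref w w' h]; exact List.take_prefix _ _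
        · right; rw [hpref w' w h]; exact List.take_prefix _ _
    · -- comultiplication
      intro w j
      have hjn : (j : ℕ) < n w := by rw [← hlen w]; exact j.isLt
      obtain ⟨hjS, hjrank⟩ := hgmem w j hjn
      have : (j : Fin (α w).length) = j := rfl
      rw [show (α w).get j = g w (j : ℕ) from hget w (j : ℕ) j.isLt]
      rw [hpref (g w (j : ℕ)) w hjS, hjrank]


end PStr
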